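/- Let A be a Boolean algebra with Stone space K_A, and let K be any compact Hausdorff space. Then irr(A) ≤ nbiort_2(K_A) and nbiort_2(K) ≤ s(K²), where K² carries the product topology. -/

import Mathlib

open Cardinal Set Topology

universe u

noncomputable section

/-- The spread of a topological space: the supremum of cardinalities of discrete subspaces. -/
def spread (Z : Type u) [TopologicalSpace Z] : Cardinal.{u} :=
  ⨆ D : {D : Set Z // DiscreteTopology D}, #D.1

/-- The density of a topological space: the least cardinality of a dense subset. -/
def densityCard (Z : Type u) [TopologicalSpace Z] : Cardinal.{u} :=
  ⨅ D : {D : Set Z // Dense D}, #D.1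

/-- The hereditary density: the supremum of the densities of all subspaces. -/
def hdens (Z : Type u) [TopologicalSpace Z] : Cardinal.{u} :=
  ⨆ S : Set Z, densityCard S

/-- The Lindelöf degree: the least cardinal κ such that every open cover
has a subcover of cardinality at most κ. -/
def lindelofDeg (Z : Type u) [TopologicalSpace Z] : Cardinal.{u} :=
  sInf {κ | ∀ (ι : Type u) (U : ι → Set Z), (∀ i, IsOpen (U i)) → (⋃ i, U i) = Set.univ →
    ∃ t : Set ι, #t ≤ κ ∧ (⋃ i ∈ t, U i) = Set.univ}

/-- The hereditary Lindelöf degree: the supremum of the Lindelöf degrees of all subspaces. -/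
def hLindelof (Z : Type u) [TopologicalSpace Z] : Cardinal.{u} :=
  ⨆ S : Set Z, lindelofDeg S

/-- A nice biorthogonal system in `C(K)`: a biorthogonal system whose functionals have
the form `δ_{x_i} - δ_{y_i}`. -/
def IsNiceBiorthSys (K : Type u) [TopologicalSpace K] {I : Type u}
    (f : I → C(K, ℝ)) (x y : I → K) : Prop :=
  (∀ i, f i (x i) - f i (y i) = 1) ∧ ∀ i j, i ≠ j → f i (x j) - f i (y j) = 0

/-- `nbiort2 K`: the supremum of cardinalities of nice biorthogonal systems in `C(K)`. -/
def nbiort2 (K : Type u) [TopologicalSpace K] : Cardinal.{u} :=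
  sSup {c | ∃ (I : Type u) (f : I → C(K, ℝ)) (x y : I → K),
    IsNiceBiorthSys K f x y ∧ c = #I}

/-- The underlying set of the Boolean subalgebra generated by a subset of a Boolean algebra. -/
def boolGen {A : Type u} [BooleanAlgebra A] (s : Set A) : Set A :=
  ⋂₀ {t : Set A | s ⊆ t ∧ (⊥ : A) ∈ t ∧ (⊤ : A) ∈ t ∧ (∀ x ∈ t, xᶜ ∈ t) ∧
      (∀ x ∈ t, ∀ y ∈ t, x ⊔ y ∈ t) ∧ (∀ x ∈ t, ∀ y ∈ t, x ⊓ y ∈ t)}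

/-- The irredundance of a Boolean algebra: the supremum of cardinalities of sets `R` such
that no `r ∈ R` belongs to the subalgebra generated by `R \\ {r}`. -/
def irrBool (A : Type u) [BooleanAlgebra A] : Cardinal.{u} :=
  sSup {c | ∃ R : Set A, (∀ r ∈ R, r ∉ boolGen (R \ {r})) ∧ c = #R}

/-- The Stone space of a Boolean algebra `A`: the space of Boolean homomorphisms `A → Bool`
(equivalently, ultrafilters on `A`) with the topology of pointwise convergence, whose
basic (cl)open sets are `[a] = {u | u a = true}`. -/
abbrev StoneSpace (A : Type u) [BooleanAlgebra A] : Type u :=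
  {g : A → Bool // g ⊤ = ⊤ ∧ g ⊥ = ⊥ ∧ (∀ a b, g (a ⊔ b) = g a ⊔ g b) ∧
    (∀ a b, g (a ⊓ b) = g a ⊓ g b)}

instance StoneSpace.compactSpace (A : Type u) [BooleanAlgebra A] :
    CompactSpace (StoneSpace A) := by
  have h2 : ∀ (op : Bool → Bool → Bool) (op' : A → A → A),
      IsClosed {g : A → Bool | ∀ a b, g (op' a b) = op (g a) (g b)} := by
    intro op op'
    have : {g : A → Bool | ∀ a b, g (op' a b) = op (g a) (g b)}
        = ⋂ (a : A), ⋂ (b : A), {g | g (op' a b) = op (g a) (g b)} := by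
      ext g; simp [Set.mem_iInter]
    rw [this]
    exact isClosed_iInter fun a => isClosed_iInter fun b =>
      isClosed_eq (continuous_apply _)
        (show Continuous ((fun p : Bool × Bool => op p.1 p.2) ∘ fun g : A → Bool => (g a, g b))
          from continuous_of_discreteTopology.comp
            ((continuous_apply a).prodMk (continuous_apply b)))
  have h : IsClosed {g : A → Bool | g ⊤ = ⊤ ∧ g ⊥ = ⊥ ∧ (∀ a b, g (a ⊔ b) = g a ⊔ g b) ∧
      (∀ a b, g (a ⊓ b) = g a ⊓ g b)} := by
    apply IsClosed.inter (isClosed_eq (continuous_apply _) continuous_const)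
    apply IsClosed.inter (isClosed_eq (continuous_apply _) continuous_const)
    exact (h2 (· ⊔ ·) (· ⊔ ·)).inter (h2 (· ⊓ ·) (· ⊓ ·))
  exact isCompact_iff_compactSpace.mp h.isCompact

namespace Aux17

lemma decide_or' (p q : Prop) [Decidable p] [Decidable q] :
    decide (p ∨ q) = (decide p ⊔ decide q) := by by_cases p <;> by_cases q <;> simp [*]

lemma decide_and' (p q : Prop) [Decidable p] [Decidable q] :
    decide (p ∧ q) = (decide p ⊓ decide q) := by by_cases p <;> by_cases q <;> simp [*]

variable {A : Type u} [BooleanAlgebra A]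

lemma subset_boolGen {S : Set A} : S ⊆ boolGen S :=
  fun _ ha _ ht => ht.1 ha

lemma bot_mem_boolGen {S : Set A} : (⊥ : A) ∈ boolGen S := fun _ ht => ht.2.1

lemma top_mem_boolGen {S : Set A} : (⊤ : A) ∈ boolGen S := fun _ ht => ht.2.2.1

lemma compl_mem_boolGen {S : Set A} {a : A} (ha : a ∈ boolGen S) : aᶜ ∈ boolGen S :=
  fun t ht => ht.2.2.2.1 a (ha t ht)

lemma inf_mem_boolGen {S : Set A} {a b : A} (ha : a ∈ boolGen S) (hb : b ∈ boolGen S) :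
    a ⊓ b ∈ boolGen S :=
  fun t ht => ht.2.2.2.2.2 a (ha t ht) b (hb t ht)

lemma sup_mem_boolGen {S : Set A} {a b : A} (ha : a ∈ boolGen S) (hb : b ∈ boolGen S) :
    a ⊔ b ∈ boolGen S :=
  fun t ht => ht.2.2.2.2.1 a (ha t ht) b (hb t ht)

open Classical in
/-- From a prime ideal, build a point of the Stone space. -/
def homOfPrime (Q : Order.Ideal A) (hQ : Order.Ideal.IsPrime Q) : StoneSpace A := by
  refine ⟨fun a => decide (a ∉ Q), ?_, ?_, ?_, ?_⟩
  · simp [hQ.toIsProper.top_notMem]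
  · simp [Q.bot_mem]
  · intro a b
    have h : (a ⊔ b ∉ Q) ↔ (a ∉ Q ∨ b ∉ Q) := by
      rw [← not_and_or, not_iff_not]
      exact ⟨fun h => ⟨Q.lower le_sup_left h, Q.lower le_sup_right h⟩,
        fun h => Order.Ideal.sup_mem h.1 h.2⟩
    show decide (a ⊔ b ∉ Q) = decide (a ∉ Q) ⊔ decide (b ∉ Q)
    rw [decide_eq_decide.mpr h, decide_or']
  · intro a b
    have h : (a ⊓ b ∉ Q) ↔ (a ∉ Q ∧ b ∉ Q) := by
      rw [← not_or, not_iff_not]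
      exact ⟨fun h => hQ.mem_or_mem h,
        fun h => h.elim (fun h => Q.lower inf_le_left h) (fun h => Q.lower inf_le_right h)⟩
    show decide (a ⊓ b ∉ Q) = decide (a ∉ Q) ⊓ decide (b ∉ Q)
    rw [decide_eq_decide.mpr h, decide_and']

open Classical in
lemma homOfPrime_eq_true {Q : Order.Ideal A} {hQ : Order.Ideal.IsPrime Q} {a : A} :
    (homOfPrime Q hQ).1 a = true ↔ a ∉ Q := by
  simp [homOfPrime]

/-- Key separation lemma. -/
lemma exists_sep {S : Set A} {r : A} (hr : r ∉ boolGen S) :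
    ∃ u v : StoneSpace A, u.1 r = true ∧ v.1 r = false ∧ ∀ s ∈ S, u.1 s = v.1 s := by
  classical
  set B := boolGen S with hB
  -- the ideal generated by elements of B below r or below rᶜ
  have hI0 : Order.IsIdeal {a : A | ∃ b c : A, (b ∈ B ∧ b ≤ r) ∧ (c ∈ B ∧ c ≤ rᶜ) ∧ a ≤ b ⊔ c} := by
    constructor
    · intro x y hxy ⟨b, c, hb, hc, h⟩
      exact ⟨b, c, hb, hc, hxy.trans h⟩
    · exact ⟨⊥, ⊥, ⊥, ⟨bot_mem_boolGen, bot_le⟩, ⟨bot_mem_boolGen, bot_le⟩, bot_le⟩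
    · rintro x ⟨b, c, hb, hc, h⟩ y ⟨b', c', hb', hc', h'⟩
      exact ⟨x ⊔ y, ⟨b ⊔ b', c ⊔ c', ⟨sup_mem_boolGen hb.1 hb'.1, sup_le hb.2 hb'.2⟩,
        ⟨sup_mem_boolGen hc.1 hc'.1, sup_le hc.2 hc'.2⟩, by
          calc x ⊔ y ≤ (b ⊔ c) ⊔ (b' ⊔ c') := sup_le_sup h h'
          _ = (b ⊔ b') ⊔ (c ⊔ c') := sup_sup_sup_comm b c b' c'⟩,
        le_sup_left, le_sup_right⟩
  have hFtop : Order.IsPFilter {a : A | ⊤ ≤ a} :=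
    Order.IsPFilter.of_def ⟨⊤, le_refl ⊤⟩
      (fun x hx y hy => ⟨⊤, le_refl ⊤, hx, hy⟩) (fun hxy hx => hx.trans hxy)
  have hdisj : Disjoint (hFtop.toPFilter : Set A) (hI0.toIdeal : Set A) := by
    rw [Set.disjoint_left]
    rintro a ha ⟨b, c, hb, hc, h⟩
    have ha' : (⊤ : A) ≤ a := ha
    have htop : b ⊔ c = ⊤ := top_le_iff.mp (ha'.trans h)
    apply hr
    have h1 : cᶜ ≤ b := by
      calc cᶜ = cᶜ ⊓ (b ⊔ c) := by rw [htop, inf_top_eq]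
        _ = (cᶜ ⊓ b) ⊔ (cᶜ ⊓ c) := inf_sup_left _ _ _
        _ = cᶜ ⊓ b := by rw [compl_inf_self, sup_bot_eq]
        _ ≤ b := inf_le_right
    have h2 : r ≤ cᶜ := by
      have := compl_le_compl hc.2
      rwa [compl_compl] at this
    have h3 : r = cᶜ := le_antisymm h2 (h1.trans hb.2)
    rw [h3]
    exact compl_mem_boolGen hc.1
  obtain ⟨P, hP, hIP, hPdisj⟩ := DistribLattice.prime_ideal_of_disjoint_filter_ideal hdisj
  -- elements of B below r or rᶜ are in P
  have hDP : ∀ b ∈ B, (b ≤ r ∨ b ≤ rᶜ) → b ∈ P := by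
    intro b hbB hbr
    apply hIP
    rcases hbr with h' | h'
    · exact ⟨b, ⊥, ⟨hbB, h'⟩, ⟨bot_mem_boolGen, bot_le⟩, le_sup_left⟩
    · exact ⟨⊥, b, ⟨bot_mem_boolGen, bot_le⟩, ⟨hbB, h'⟩, le_sup_right⟩
  have htopP : (⊤ : A) ∉ P := hP.toIsProper.top_notMem
  -- the filter generated by (B \ P) and an element w with b ⊓ w ≠ ⊥ for b ∈ B \ P
  have mkF : ∀ w : A, (∀ b ∈ B, b ∉ P → b ⊓ w ≠ ⊥) →
      ∃ Q : Order.Ideal A, Q.IsPrime ∧ w ∉ Q ∧ ∀ b ∈ B, b ∉ P → b ∉ Q := by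
    intro w hw
    have hF : Order.IsPFilter {a : A | ∃ b, b ∈ B ∧ b ∉ P ∧ b ⊓ w ≤ a} := by
      refine Order.IsPFilter.of_def ⟨w, ⊤, top_mem_boolGen, htopP, by simp⟩ ?_ ?_
      · rintro x ⟨b, hbB, hbP, hbx⟩ y ⟨b', hbB', hbP', hby⟩
        refine ⟨x ⊓ y, ⟨b ⊓ b', inf_mem_boolGen hbB hbB', ?_, ?_⟩, inf_le_left, inf_le_right⟩
        · intro hmem
          rcases hP.mem_or_mem hmem with h' | h'
          exacts [hbP h', hbP' h']
        · exact le_inf ((inf_le_inf_right w inf_le_left).trans hbx)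
            ((inf_le_inf_right w inf_le_right).trans hby)
      · rintro x y hxy ⟨b, hbB, hbP, hbx⟩
        exact ⟨b, hbB, hbP, hbx.trans hxy⟩
    have hIbot : Order.IsIdeal {a : A | a ≤ ⊥} := by
      refine ⟨fun x y hxy hy => hxy.trans hy, ⟨⊥, le_refl _⟩, fun x hx y hy => ⟨⊥, le_refl _, hx, hy⟩⟩
    have hd : Disjoint (hF.toPFilter : Set A) (hIbot.toIdeal : Set A) := by
      rw [Set.disjoint_left]
      rintro a ⟨b, hbB, hbP, hba⟩ ha
      have : b ⊓ w = ⊥ := le_bot_iff.mp (hba.trans ha)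
      exact hw b hbB hbP this
    obtain ⟨Q, hQ, _, hQd⟩ := DistribLattice.prime_ideal_of_disjoint_filter_ideal hd
    rw [Set.disjoint_left] at hQd
    refine ⟨Q, hQ, hQd ⟨⊤, top_mem_boolGen, htopP, inf_le_right⟩, fun b hbB hbP => hQd ⟨b, hbB, hbP, inf_le_left⟩⟩
  have hwr : ∀ b ∈ B, b ∉ P → b ⊓ r ≠ ⊥ := by
    intro b hbB hbP hbot
    exact hbP (hDP b hbB (Or.inr (disjoint_iff.mpr hbot).le_compl_right))
  have hwrc : ∀ b ∈ B, b ∉ P → b ⊓ rᶜ ≠ ⊥ := by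
    intro b hbB hbP hbot
    have : b ≤ rᶜᶜ := (disjoint_iff.mpr hbot).le_compl_right
    rw [compl_compl] at this
    exact hbP (hDP b hbB (Or.inl this))
  obtain ⟨Qu, hQu, hru, hBu⟩ := mkF r hwr
  obtain ⟨Qv, hQv, hrv, hBv⟩ := mkF rᶜ hwrc
  refine ⟨homOfPrime Qu hQu, homOfPrime Qv hQv, ?_, ?_, ?_⟩
  · exact homOfPrime_eq_true.mpr hru
  · have : r ∈ Qv := (hQv.mem_or_compl_mem).resolve_right hrv
    simp [homOfPrime, this]
  · intro s hs
    have hsB : s ∈ B := subset_boolGen hs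
    by_cases hsP : s ∈ P
    · have hscP : sᶜ ∉ P := by
        intro h'
        exact htopP (by simpa [sup_compl_eq_top] using Order.Ideal.sup_mem hsP h')
      have hscu : sᶜ ∉ Qu := hBu sᶜ (compl_mem_boolGen hsB) hscP
      have hscv : sᶜ ∉ Qv := hBv sᶜ (compl_mem_boolGen hsB) hscP
      have hsu : s ∈ Qu := (hQu.mem_or_compl_mem).resolve_right hscu
      have hsv : s ∈ Qv := (hQv.mem_or_compl_mem).resolve_right hscv
      simp [homOfPrime, hsu, hsv]
    · have h1 := hBu s hsB hsP
      have h2 := hBv s hsB hsP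
      simp [homOfPrime, h1, h2]


section NBiort
variable {K : Type u} [TopologicalSpace K]

lemma nice_inj {I : Type u} {f : I → C(K, ℝ)} {x y : I → K}
    (h : IsNiceBiorthSys K f x y) : Function.Injective (fun i => (x i, y i)) := by
  intro i j hij
  by_contra hne
  have h0 := h.2 i j hne
  have hx : x i = x j := congrArg Prod.fst hij
  have hy : y i = y j := congrArg Prod.snd hij
  rw [← hx, ← hy, h.1 i] at h0
  norm_num at h0

lemma nbiort_set_nonempty :
    {c | ∃ (I : Type u) (f : I → C(K, ℝ)) (x y : I → K),
      IsNiceBiorthSys K f x y ∧ c = #I}.Nonempty :=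
  ⟨#(PEmpty.{u+1}), PEmpty.{u+1}, fun i => i.elim, fun i => i.elim, fun i => i.elim,
    ⟨fun i => i.elim, fun i _ _ => i.elim⟩, rfl⟩

lemma nbiort_set_bddAbove :
    BddAbove {c | ∃ (I : Type u) (f : I → C(K, ℝ)) (x y : I → K),
      IsNiceBiorthSys K f x y ∧ c = #I} := by
  refine ⟨#(K × K), ?_⟩
  rintro c ⟨I, f, x, y, hs, rfl⟩
  exact Cardinal.mk_le_of_injective (nice_inj hs)

lemma nbiort_le_spread : nbiort2 K ≤ spread (K × K) := by
  apply csSup_le nbiort_set_nonempty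
  rintro c ⟨I, f, x, y, hs, rfl⟩
  set e : I → K × K := fun i => (x i, y i) with he
  have hinj : Function.Injective e := nice_inj hs
  set D : Set (K × K) := Set.range e with hD
  have hdisc : DiscreteTopology ↥D := by
    rw [discreteTopology_iff_isOpen_singleton]
    rintro ⟨d, i, rfl⟩
    have hU : IsOpen {p : K × K | 1/2 < f i p.1 - f i p.2} :=
      isOpen_lt continuous_const
        (((f i).continuous.comp continuous_fst).sub ((f i).continuous.comp continuous_snd))
    have key : ({⟨e i, ⟨i, rfl⟩⟩} : Set ↥D)
        = (Subtype.val) ⁻¹' {p : K × K | 1/2 < f i p.1 - f i p.2} := by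
      ext ⟨d', j, rfl⟩
      simp only [Set.mem_singleton_iff, Set.mem_preimage, Set.mem_setOf_eq, Subtype.mk.injEq]
      constructor
      · intro h'
        have : j = i := hinj (congrArg Subtype.val h')
        subst this
        show 1/2 < f j (x j) - f j (y j)
        rw [hs.1 j]; norm_num
      · intro h'
        by_cases hji : j = i
        · rw [hji]
        · exfalso
          have h0 := hs.2 i j (fun h => hji h.symm)
          rw [show (1:ℝ)/2 < f i (e j).1 - f i (e j).2 ↔ 1/2 < f i (x j) - f i (y j) from Iff.rfl,
            h0] at h'
          norm_num at h'
    exact key ▸ hU.preimage continuous_subtype_val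
  have h1 : #I = #↥D := (Cardinal.mk_range_eq e hinj).symm
  have h2 : #↥D ≤ spread (K × K) := by
    have hb : BddAbove (Set.range fun D : {D : Set (K × K) // DiscreteTopology ↥D} => #↥D.1) := by
      refine ⟨#(K × K), ?_⟩
      rintro c ⟨D', rfl⟩
      exact Cardinal.mk_set_le _
    exact le_ciSup hb (⟨D, hdisc⟩ : {D : Set (K × K) // DiscreteTopology ↥D})
  exact h1 ▸ h2

end NBiort

variable (A)

lemma irr_le_nbiort : irrBool A ≤ nbiort2 (StoneSpace A) := by
  refine csSup_le ?_ ?_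
  · exact ⟨#(∅ : Set A), ∅, fun r hr => absurd hr (Set.notMem_empty r), rfl⟩
  rintro c ⟨R, hR, rfl⟩
  have hsep : ∀ i : ↥R, ∃ u v : StoneSpace A,
      u.1 i.1 = true ∧ v.1 i.1 = false ∧ ∀ s ∈ R \ {i.1}, u.1 s = v.1 s :=
    fun i => exists_sep (hR i.1 i.2)
  choose u v hu hv hagree using hsep
  have hcont : ∀ a : A, Continuous fun g : StoneSpace A => (if g.1 a = true then (1:ℝ) else 0) := by
    intro a
    exact Continuous.comp (continuous_of_discreteTopology
        (f := fun b : Bool => if b = true then (1:ℝ) else 0))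
      ((continuous_apply a).comp continuous_subtype_val)
  set f : ↥R → C(StoneSpace A, ℝ) :=
    fun i => ⟨fun g => if g.1 i.1 = true then (1:ℝ) else 0, hcont i.1⟩ with hf
  have hsys : IsNiceBiorthSys (StoneSpace A) f u v := by
    constructor
    · intro i
      show (if (u i).1 i.1 = true then (1:ℝ) else 0) - (if (v i).1 i.1 = true then (1:ℝ) else 0) = 1
      rw [hu i, hv i]; norm_num
    · intro i j hij
      show (if (u j).1 i.1 = true then (1:ℝ) else 0) - (if (v j).1 i.1 = true then (1:ℝ) else 0) = 0
      have hmem : i.1 ∈ R \ {j.1} := ⟨i.2, fun h => hij (Subtype.ext h)⟩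
      rw [hagree j i.1 hmem]
      ring
  exact le_csSup nbiort_set_bddAbove ⟨↥R, f, u, v, hsys, rfl⟩

end Aux17

/-- For a Boolean algebra `A` with Stone space `K_A` and any compact Hausdorff
space `K`: `irr(A) ≤ nbiort₂(K_A)` and `nbiort₂(K) ≤ s(K²)`. -/
theorem stmt17 (A : Type u) [BooleanAlgebra A]
    (K : Type u) [TopologicalSpace K] [CompactSpace K] [T2Space K] :
    irrBool A ≤ nbiort2 (StoneSpace A) ∧ nbiort2 K ≤ spread (K × K) :=
  ⟨Aux17.irr_le_nbiort A, Aux17.nbiort_le_spread⟩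

end
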